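/- Let n be an even integer, and let k₁, k₂ be integers with 1 ≤ k₁, k₂ ≤ n/2, d₁ = gcd(n,k₁), d₂ = gcd(n,k₂), and suppose 1 < d₁ < d₂ = n/2 (so k₂ = n/2). Set n₁ = n/d₁ and suppose n₁ is even. Then gcd(d₁, d₂) = d₁, the circulant graph C(ℤ_n, {k₁, k₂}) has exactly d₁ connected components, these components are pairwise isomorphic, and each component is isomorphic to the circulant graph C(ℤ_{n₁}, {1, n₁/2}). -/

import Mathlib

open SimpleGraph

/-- The circulant graph `C(ℤ_n, S)`: vertices are `ZMod n`, and distinct `i, j` are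
adjacent iff `i - j ≡ s` or `i - j ≡ -s (mod n)` for some `s ∈ S`. -/
def circulant (n : ℕ) (S : Set ℤ) : SimpleGraph (ZMod n) :=
  SimpleGraph.fromRel fun i j => ∃ s ∈ S, i - j = (s : ZMod n)

/-- `C(n,k) = C(ℤ_n, {1, k})`. -/
def circ (n k : ℕ) : SimpleGraph (ZMod n) := circulant n {1, (k : ℤ)}

/-- The maximum degree `Δ(G)` of a graph. -/
noncomputable def maxDeg {V : Type*} (G : SimpleGraph V) : ℕ :=
  sSup (Set.range fun v => (G.neighborSet v).ncard)

/-- `x` lies strictly between positions `a` and `b` on the circular layout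
(cut open along the linear order of `Fin N`). -/
def ChordBetween {N : ℕ} (x a b : Fin N) : Prop := min a b < x ∧ x < max a b

/-- The chords joining the positions `a,b` and `c,d` on a circle cross iff exactly one of
`c, d` lies strictly between `a` and `b`. -/
def ChordCross {N : ℕ} (a b c d : Fin N) : Prop :=
  Xor' (ChordBetween c a b) (ChordBetween d a b)

/-- `G` admits a matching book embedding in `m` pages: there is a circular layout
(a bijection of the vertices with `Fin (Nat.card V)`) and a proper edge coloring with
`m` colors such that crossing edges get distinct colors. -/
def HasMBE {V : Type*} (G : SimpleGraph V) (m : ℕ) : Prop :=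
  ∃ (σ : V ≃ Fin (Nat.card V)) (col : V → V → Fin m),
    (∀ u v, G.Adj u v → col u v = col v u) ∧
    (∀ u v w, G.Adj u v → G.Adj u w → v ≠ w → col u v ≠ col u w) ∧
    (∀ a b c d, G.Adj a b → G.Adj c d →
      ChordCross (σ a) (σ b) (σ c) (σ d) → col a b ≠ col c d)

/-- The matching book thickness `mbt(G)`. -/
noncomputable def mbt {V : Type*} (G : SimpleGraph V) : ℕ :=
  sInf {m | HasMBE G m}

/-- The remainder algorithm from the paper: `k₀ = k`, `r₀ = r`,
`k_{i+1} = k_i - r_i`, `r_{i+1} = k_i mod k_{i+1}`. -/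
def euclidSeq (k r : ℕ) : ℕ → ℕ × ℕ
  | 0 => (k, r)
  | i + 1 =>
      ((euclidSeq k r i).1 - (euclidSeq k r i).2,
       (euclidSeq k r i).1 % ((euclidSeq k r i).1 - (euclidSeq k r i).2))



section StmtElevenAux
open AddSubgroup

lemma circulant_adj {n : ℕ} {S : Set ℤ} {u v : ZMod n} :
    (circulant n S).Adj u v ↔ u ≠ v ∧ ∃ s ∈ S, u - v = (s : ZMod n) ∨ u - v = -(s : ZMod n) := by
  simp only [circulant, fromRel_adj]
  constructor
  · rintro ⟨h, ⟨s, hs, he⟩ | ⟨s, hs, he⟩⟩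
    · exact ⟨h, s, hs, Or.inl he⟩
    · exact ⟨h, s, hs, Or.inr (by rw [← neg_sub, he])⟩
  · rintro ⟨h, s, hs, he | he⟩
    · exact ⟨h, Or.inl ⟨s, hs, he⟩⟩
    · exact ⟨h, Or.inr ⟨s, hs, by rw [← neg_sub, he, neg_neg]⟩⟩

def circTrans (n : ℕ) (S : Set ℤ) (t : ZMod n) : circulant n S ≃g circulant n S where
  toEquiv := Equiv.addRight t
  map_rel_iff' := by
    intro a b
    simp only [circulant, fromRel_adj, Equiv.coe_addRight, add_sub_add_right_eq_sub,
      ne_eq, add_left_inj]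

@[simp] lemma circTrans_apply (n : ℕ) (S : Set ℤ) (t u : ZMod n) :
    circTrans n S t u = u + t := rfl

lemma reach_to_mem {n : ℕ} {S : Set ℤ} {u v : ZMod n}
    (h : (circulant n S).Reachable u v) :
    u - v ∈ AddSubgroup.closure ((fun s : ℤ => (s : ZMod n)) '' S) := by
  obtain ⟨p⟩ := h
  induction p with
  | nil => simpa using AddSubgroup.zero_mem _
  | @cons a b c h p ih =>
      have hab : a - b ∈ AddSubgroup.closure ((fun s : ℤ => (s : ZMod n)) '' S) := by
        obtain ⟨hne, s, hs, hc | hc⟩ := circulant_adj.1 h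
        · exact hc ▸ AddSubgroup.subset_closure ⟨s, hs, rfl⟩
        · exact hc ▸ AddSubgroup.neg_mem _ (AddSubgroup.subset_closure ⟨s, hs, rfl⟩)
      simpa [sub_add_sub_cancel] using AddSubgroup.add_mem _ hab ih

lemma reach0 {n : ℕ} {S : Set ℤ} {x : ZMod n}
    (hx : x ∈ AddSubgroup.closure ((fun s : ℤ => (s : ZMod n)) '' S)) :
    (circulant n S).Reachable 0 x := by
  induction hx using AddSubgroup.closure_induction with
  | mem x hx =>
      obtain ⟨s, hs, rfl⟩ := hx
      show (circulant n S).Reachable 0 (s : ZMod n)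
      by_cases h0 : (s : ZMod n) = 0
      · rw [h0]
      · refine (SimpleGraph.Adj.reachable ?_).symm
        rw [circulant_adj]
        exact ⟨h0, s, hs, Or.inl (by simp)⟩
  | zero => exact Reachable.refl 0
  | add x y hx hy ihx ihy =>
      have := Reachable.map (circTrans n S x).toHom ihy
      change (circulant n S).Reachable (0 + x) (y + x) at this
      simp only [circTrans_apply, zero_add] at this
      refine ihx.trans ?_
      simpa [add_comm] using this
  | neg x hx ihx =>
      have := Reachable.map (circTrans n S (-x)).toHom ihx.symm
      simpa [circTrans] using this

lemma circulant_reachable_iff {n : ℕ} {S : Set ℤ} (u v : ZMod n) :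
    (circulant n S).Reachable u v ↔
      u - v ∈ AddSubgroup.closure ((fun s : ℤ => (s : ZMod n)) '' S) := by
  constructor
  · exact reach_to_mem
  · intro h
    have h' : v - u ∈ AddSubgroup.closure ((fun s : ℤ => (s : ZMod n)) '' S) := by
      simpa using AddSubgroup.neg_mem _ h
    have := Reachable.map (circTrans n S u).toHom (reach0 h')
    simpa [circTrans] using this

lemma mem_closure_singleton_natCast_iff {n d : ℕ} (hd : d ∣ n) (hd0 : d ≠ 0) (hn0 : n ≠ 0) (x : ZMod n) :
    x ∈ AddSubgroup.closure {(d : ZMod n)} ↔ ZMod.castHom hd (ZMod d) x = 0 := by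
  haveI : NeZero d := ⟨hd0⟩
  constructor
  · rw [AddSubgroup.mem_closure_singleton]
    rintro ⟨z, rfl⟩
    rw [zsmul_eq_mul, map_mul, map_natCast, ZMod.natCast_self, mul_zero]
  · intro h
    haveI : NeZero n := ⟨hn0⟩
    have hx : ((x.val : ℕ) : ZMod n) = x := ZMod.natCast_rightInverse x
    have h2 : ((x.val : ℕ) : ZMod d) = 0 := by
      rw [← map_natCast (ZMod.castHom hd (ZMod d)), hx, h]
    have hdvd : d ∣ x.val := (ZMod.natCast_eq_zero_iff _ _).1 h2
    obtain ⟨t, ht⟩ := hdvd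
    rw [AddSubgroup.mem_closure_singleton]
    exact ⟨t, by rw [zsmul_eq_mul, ← hx, ht]; push_cast; ring⟩

lemma key (n d₁ n₁ m q k₁ k₂ : ℕ)
    (hgcd : d₁ = Nat.gcd n k₁)
    (hn : d₁ * n₁ = n) (hk₁ : d₁ * m = k₁) (hk₂ : d₁ * q = k₂) (hq : 2 * q = n₁)
    (hcop : Nat.Coprime n₁ m) (hmodd : m % 2 = 1)
    (hd₁0 : d₁ ≠ 0) (hn₁0 : n₁ ≠ 0) :
    Nat.card (circulant n {(k₁ : ℤ), (k₂ : ℤ)}).ConnectedComponent = d₁ ∧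
    ∀ c : (circulant n {(k₁ : ℤ), (k₂ : ℤ)}).ConnectedComponent,
      Nonempty ((circulant n {(k₁ : ℤ), (k₂ : ℤ)}).induce c.supp ≃g
        circulant n₁ {1, ((n₁ / 2 : ℕ) : ℤ)}) := by
  have hn0 : n ≠ 0 := by
    rw [← hn]; exact Nat.mul_ne_zero hd₁0 hn₁0
  haveI : NeZero n := ⟨hn0⟩
  haveI : NeZero n₁ := ⟨hn₁0⟩
  haveI : NeZero d₁ := ⟨hd₁0⟩
  have hdn : d₁ ∣ n := ⟨n₁, hn.symm⟩
  set G := circulant n {(k₁ : ℤ), (k₂ : ℤ)} with hG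
  -- image of the connection set
  have himg : ((fun s : ℤ => (s : ZMod n)) '' {(k₁ : ℤ), (k₂ : ℤ)}) =
      {(k₁ : ZMod n), (k₂ : ZMod n)} := by
    simp [Set.image_insert_eq]
  -- the closure equals the closure of d₁
  have hHd : AddSubgroup.closure {(k₁ : ZMod n), (k₂ : ZMod n)} =
      AddSubgroup.closure {(d₁ : ZMod n)} := by
    apply le_antisymm
    · rw [AddSubgroup.closure_le]
      rintro x (rfl | rfl)
      · rw [SetLike.mem_coe, AddSubgroup.mem_closure_singleton]
        exact ⟨(m : ℤ), by rw [zsmul_eq_mul, ← hk₁]; push_cast; ring⟩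
      · rw [SetLike.mem_coe, AddSubgroup.mem_closure_singleton]
        exact ⟨(q : ℤ), by rw [zsmul_eq_mul, ← hk₂]; push_cast; ring⟩
    · rw [AddSubgroup.closure_le]
      intro x hx
      rw [Set.mem_singleton_iff] at hx
      subst hx
      rw [SetLike.mem_coe]
      have hbez : ((Nat.gcd n k₁ : ℕ) : ℤ) = n * Int.gcdA n k₁ + k₁ * Int.gcdB n k₁ := by
        rw [← Int.gcd_natCast_natCast]; exact Int.gcd_eq_gcd_ab _ _
      have hmem : (d₁ : ZMod n) ∈ AddSubgroup.closure {(k₁ : ZMod n)} := by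
        rw [AddSubgroup.mem_closure_singleton]
        refine ⟨Int.gcdB n k₁, ?_⟩
        have := congrArg (fun z : ℤ => (z : ZMod n)) hbez
        simp only [Int.cast_add, Int.cast_mul, Int.cast_natCast, ZMod.natCast_self,
          zero_mul, zero_add] at this
        rw [zsmul_eq_mul, hgcd, this]; ring
      exact AddSubgroup.closure_mono (Set.singleton_subset_iff.2 (Set.mem_insert _ _)) hmem
  have hreach : ∀ u v : ZMod n, G.Reachable u v ↔
      u - v ∈ AddSubgroup.closure {(d₁ : ZMod n)} := by
    intro u v; rw [hG, circulant_reachable_iff, himg, hHd]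
  -- counting components
  have hwd : ∀ (v w : ZMod n) (p : G.Walk v w), p.IsPath →
      ZMod.castHom hdn (ZMod d₁) v = ZMod.castHom hdn (ZMod d₁) w := by
    intro v w p _
    have hr : G.Reachable v w := ⟨p⟩
    have := (mem_closure_singleton_natCast_iff hdn hd₁0 hn0 _).1 ((hreach v w).1 hr)
    rw [map_sub, sub_eq_zero] at this
    exact this
  let f : G.ConnectedComponent → ZMod d₁ :=
    SimpleGraph.ConnectedComponent.lift (fun v => ZMod.castHom hdn (ZMod d₁) v) hwd
  have hfinj : Function.Injective f := by
    intro c c' h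
    obtain ⟨u, rfl⟩ := Quot.exists_rep c
    obtain ⟨v, rfl⟩ := Quot.exists_rep c'
    have h' : ZMod.castHom hdn (ZMod d₁) u = ZMod.castHom hdn (ZMod d₁) v := h
    apply SimpleGraph.ConnectedComponent.sound
    rw [hreach]
    rw [mem_closure_singleton_natCast_iff hdn hd₁0 hn0, map_sub, sub_eq_zero]
    exact h'
  have hfsurj : Function.Surjective f := by
    intro y
    refine ⟨G.connectedComponentMk ((y.val : ℕ) : ZMod n), ?_⟩
    show ZMod.castHom hdn (ZMod d₁) ((y.val : ℕ) : ZMod n) = y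
    rw [map_natCast]
    exact ZMod.natCast_rightInverse y
  have hcard : Nat.card G.ConnectedComponent = d₁ := by
    rw [Nat.card_congr (Equiv.ofBijective f ⟨hfinj, hfsurj⟩), Nat.card_zmod]
  refine ⟨hcard, ?_⟩
  -- the map g : ZMod n₁ →+ ZMod n
  have hlift : (zmultiplesHom (ZMod n) (k₁ : ZMod n)) (n₁ : ℤ) = 0 := by
    simp only [zmultiplesHom_apply, zsmul_eq_mul, Int.cast_natCast]
    rw [← Nat.cast_mul, show n₁ * k₁ = n * m by rw [← hn, ← hk₁]; ring,
      Nat.cast_mul, ZMod.natCast_self, zero_mul]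
  set g : ZMod n₁ →+ ZMod n := ZMod.lift n₁ ⟨zmultiplesHom (ZMod n) (k₁ : ZMod n), hlift⟩
    with hgdef
  have hg_int : ∀ z : ℤ, g ((z : ℤ) : ZMod n₁) = ((z * k₁ : ℤ) : ZMod n) := by
    intro z
    rw [hgdef, ZMod.lift_coe]
    simp only [zmultiplesHom_apply, zsmul_eq_mul]
    push_cast; ring
  have hg_val : ∀ t : ZMod n₁, g t = ((t.val * k₁ : ℕ) : ZMod n) := by
    intro t
    conv_lhs => rw [← ZMod.natCast_rightInverse t]
    have : ((t.val : ℕ) : ZMod n₁) = ((t.val : ℤ) : ZMod n₁) := by push_cast; rfl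
    rw [this, hg_int]
    push_cast; ring_nf
  have hginj : Function.Injective g := by
    rw [injective_iff_map_eq_zero]
    intro t ht
    rw [hg_val, ZMod.natCast_eq_zero_iff] at ht
    have h1 : d₁ * n₁ ∣ d₁ * (t.val * m) := by
      rw [show d₁ * (t.val * m) = t.val * (d₁ * m) by ring, hk₁, hn]; exact ht
    have h2 : n₁ ∣ t.val * m := (Nat.mul_dvd_mul_iff_left (Nat.pos_of_ne_zero hd₁0)).1 h1
    have h3 : n₁ ∣ t.val := hcop.dvd_of_dvd_mul_right h2
    have h4 : t.val = 0 := Nat.eq_zero_of_dvd_of_lt h3 (ZMod.val_lt t)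
    exact (ZMod.val_eq_zero t).1 h4
  have hg1 : g 1 = (k₁ : ZMod n) := by
    have h := hg_int 1
    simpa using h
  have hq' : n₁ / 2 = q := by omega
  obtain ⟨j, hj⟩ : ∃ j, m = 2 * j + 1 := ⟨m / 2, by omega⟩
  have hnat : q * k₁ = k₂ + n * j := by
    subst hk₁ hk₂ hn hq hj; ring
  have hgq : g ((q : ℕ) : ZMod n₁) = (k₂ : ZMod n) := by
    have h := hg_int (q : ℤ)
    have hcast : ((q : ℤ) : ZMod n₁) = ((q : ℕ) : ZMod n₁) := by push_cast; rfl
    rw [hcast] at h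
    rw [h, show ((q : ℤ) * k₁) = ((q * k₁ : ℕ) : ℤ) by push_cast; ring, hnat]
    push_cast [ZMod.natCast_self]
    ring
  have hrange : ∀ x : ZMod n, x ∈ AddSubgroup.closure {(d₁ : ZMod n)} ↔ ∃ t, g t = x := by
    intro x
    constructor
    · rw [AddSubgroup.mem_closure_singleton]
      rintro ⟨z, rfl⟩
      have hbez : (1 : ℤ) = m * Int.gcdA m n₁ + n₁ * Int.gcdB m n₁ := by
        have h := Int.gcd_eq_gcd_ab (m : ℤ) (n₁ : ℤ)
        rwa [Int.gcd_natCast_natCast, Nat.Coprime.gcd_eq_one hcop.symm, Nat.cast_one] at h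
      set w := Int.gcdA m n₁ with hw
      set v := Int.gcdB m n₁ with hv
      refine ⟨((z * w : ℤ) : ZMod n₁), ?_⟩
      rw [hg_int, zsmul_eq_mul]
      have hk₁' : (d₁ : ℤ) * m = k₁ := by exact_mod_cast hk₁
      have hn' : (d₁ : ℤ) * n₁ = n := by exact_mod_cast hn
      have hdvd : (n : ℤ) ∣ (z * w * k₁ - z * d₁) := by
        refine ⟨-(z * v), ?_⟩
        linear_combination (-(z * w)) * hk₁' - (z * v) * hn' - (z * (d₁ : ℤ)) * hbez
      have h0 := (ZMod.intCast_zmod_eq_zero_iff_dvd _ n).2 hdvd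
      push_cast at h0 ⊢
      linear_combination h0
    · rintro ⟨t, rfl⟩
      rw [AddSubgroup.mem_closure_singleton]
      refine ⟨(t.val * m : ℤ), ?_⟩
      rw [hg_val, zsmul_eq_mul, ← hk₁]
      push_cast
      ring
  refine SimpleGraph.ConnectedComponent.ind ?_
  intro a
  have hsupp : ∀ v : ZMod n, v ∈ (G.connectedComponentMk a).supp ↔ ∃ t, g t = v - a := by
    intro v
    rw [SimpleGraph.ConnectedComponent.mem_supp_iff, SimpleGraph.ConnectedComponent.eq,
      hreach, hrange]
  have hmem : ∀ t : ZMod n₁, a + g t ∈ (G.connectedComponentMk a).supp :=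
    fun t => (hsupp _).2 ⟨t, by ring⟩
  let φ : ZMod n₁ → (G.connectedComponentMk a).supp := fun t => ⟨a + g t, hmem t⟩
  have hφinj : Function.Injective φ := by
    intro t t' h
    apply hginj
    have h2 := congrArg Subtype.val h
    simpa [φ] using h2
  have hφsurj : Function.Surjective φ := by
    rintro ⟨v, hv⟩
    obtain ⟨t, ht⟩ := (hsupp v).1 hv
    refine ⟨t, Subtype.ext ?_⟩
    show a + g t = v
    rw [ht]; ring
  have hadj : ∀ t t' : ZMod n₁, G.Adj (a + g t) (a + g t') ↔
      (circulant n₁ {1, ((n₁ / 2 : ℕ) : ℤ)}).Adj t t' := by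
    intro t t'
    rw [hG, circulant_adj, circulant_adj]
    simp only [Set.mem_insert_iff, Set.mem_singleton_iff, exists_eq_or_imp, exists_eq_left,
      Int.cast_one, Int.cast_natCast, hq']
    rw [show a + g t - (a + g t') = g (t - t') by rw [map_sub]; ring]
    rw [show (a + g t ≠ a + g t') ↔ t ≠ t' by simp [hginj.eq_iff]]
    rw [show (g (t - t') = (k₁ : ZMod n)) ↔ t - t' = 1 by rw [← hg1, hginj.eq_iff],
      show (g (t - t') = -(k₁ : ZMod n)) ↔ t - t' = -1 by rw [← hg1, ← map_neg, hginj.eq_iff],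
      show (g (t - t') = (k₂ : ZMod n)) ↔ t - t' = ((q : ℕ) : ZMod n₁) by
        rw [← hgq, hginj.eq_iff],
      show (g (t - t') = -(k₂ : ZMod n)) ↔ t - t' = -((q : ℕ) : ZMod n₁) by
        rw [← hgq, ← map_neg, hginj.eq_iff]]
  have iso : circulant n₁ {1, ((n₁ / 2 : ℕ) : ℤ)} ≃g
      G.induce (G.connectedComponentMk a).supp :=
    { toEquiv := Equiv.ofBijective φ ⟨hφinj, hφsurj⟩,
      map_rel_iff' := by
        intro t t'
        show (G.induce _).Adj (φ t) (φ t') ↔ _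
        rw [SimpleGraph.comap_adj]
        exact hadj t t' }
  exact ⟨iso.symm⟩

end StmtElevenAux

/-- `n` even, `1 < d₁ < d₂ = n/2`, `n₁ = n/d₁` even: then
`gcd(d₁,d₂) = d₁`, there are exactly `d₁` pairwise-isomorphic connected components,
each isomorphic to `C(ℤ_{n₁}, {1, n₁/2})`. -/
theorem stmt11 (n k₁ k₂ n₁ : ℕ) (hne : Even n) (h₁ : 1 ≤ k₁) (h₁' : 2 * k₁ ≤ n)
    (h₂ : 1 ≤ k₂) (h₂' : 2 * k₂ ≤ n)
    (hd₁ : 1 < Nat.gcd n k₁) (hdd : Nat.gcd n k₁ < Nat.gcd n k₂)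
    (hd₂ : 2 * Nat.gcd n k₂ = n)
    (hn₁ : n₁ = n / Nat.gcd n k₁) (heven : Even n₁) :
    Nat.gcd (Nat.gcd n k₁) (Nat.gcd n k₂) = Nat.gcd n k₁ ∧
    Nat.card (circulant n {(k₁ : ℤ), (k₂ : ℤ)}).ConnectedComponent = Nat.gcd n k₁ ∧
    (∀ c c' : (circulant n {(k₁ : ℤ), (k₂ : ℤ)}).ConnectedComponent,
      Nonempty ((circulant n {(k₁ : ℤ), (k₂ : ℤ)}).induce c.supp ≃g (circulant n {(k₁ : ℤ), (k₂ : ℤ)}).induce c'.supp)) ∧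
    (∀ c : (circulant n {(k₁ : ℤ), (k₂ : ℤ)}).ConnectedComponent,
      Nonempty ((circulant n {(k₁ : ℤ), (k₂ : ℤ)}).induce c.supp ≃g circulant n₁ {1, ((n₁ / 2 : ℕ) : ℤ)})) := by
  classical
  set d₁ := Nat.gcd n k₁ with hd₁def
  set d₂ := Nat.gcd n k₂ with hd₂def
  have hn0 : n ≠ 0 := by omega
  have hd₂k : k₂ = d₂ := by
    have h1 : d₂ ∣ k₂ := Nat.gcd_dvd_right n k₂
    have h2 : d₂ ≤ k₂ := Nat.le_of_dvd (by omega) h1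
    omega
  have hdn : d₁ ∣ n := Nat.gcd_dvd_left n k₁
  have hdk : d₁ ∣ k₁ := Nat.gcd_dvd_right n k₁
  have hmul : d₁ * n₁ = n := by rw [hn₁]; exact Nat.mul_div_cancel' hdn
  have hd₁0 : d₁ ≠ 0 := by omega
  have hn₁0 : n₁ ≠ 0 := by
    intro h; rw [h, mul_zero] at hmul; omega
  set q := n₁ / 2 with hqdef
  have hq : 2 * q = n₁ := by
    obtain ⟨r, hr⟩ := heven; omega
  set m := k₁ / d₁ with hmdef
  have hk₁ : d₁ * m = k₁ := Nat.mul_div_cancel' hdk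
  have hcop : Nat.Coprime n₁ m := by
    rw [hn₁, hmdef, hd₁def]
    exact Nat.coprime_div_gcd_div_gcd (by omega)
  have hmodd : m % 2 = 1 := by
    rcases Nat.even_or_odd m with he | ho
    · exfalso
      have h2 : (2 : ℕ) ∣ Nat.gcd n₁ m :=
        Nat.dvd_gcd (by obtain ⟨r, hr⟩ := heven; omega) (by obtain ⟨r, hr⟩ := he; omega)
      rw [Nat.Coprime] at hcop
      omega
    · obtain ⟨r, hr⟩ := ho; omega
  have hk₂ : d₁ * q = k₂ := by
    have h1 : 2 * k₂ = d₁ * (2 * q) := by rw [hq, hmul]; omega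
    have h2 : d₁ * (2 * q) = 2 * (d₁ * q) := by ring
    omega
  have hK := key n d₁ n₁ m q k₁ k₂ hd₁def hmul hk₁ hk₂ hq hcop hmodd hd₁0 hn₁0
  refine ⟨Nat.gcd_eq_left ⟨q, by rw [← hd₂k, ← hk₂]⟩, hK.1, ?_, hK.2⟩
  intro c c'
  obtain ⟨e⟩ := hK.2 c
  obtain ⟨e'⟩ := hK.2 c'
  exact ⟨e.trans e'.symm⟩
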